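/- For 1/2 < p < 1, q = 1-p, and α in the open interval (1/log(1/q), 1/log(1/p)), the quantity ρ(α) = -(1/log(p/q)) · log((α·log(1/q) - 1)/(1 - α·log(1/p))) is the unique real solution s of the saddle point equation α · T'(s)/T(s) = 1, where T(s) = p^{-s} + q^{-s}. -/

import Mathlib

open Real Set

/-- For `1/2 < p < 1`, `q = 1-p`, and `α ∈ (1/log(1/q), 1/log(1/p))`, the quantity
`ρ(α) = -(1/log(p/q)) * log((α log(1/q) - 1)/(1 - α log(1/p)))` is the unique real
solution `s` of the saddle point equation `α * T'(s)/T(s) = 1`, where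
`T(s) = p^(-s) + q^(-s)` and `T'` is its derivative. -/
theorem renyi_saddle_point_unique (p : ℝ) (hp : 1/2 < p) (hp1 : p < 1)
    (q : ℝ) (hq : q = 1 - p)
    (α : ℝ) (hα : 1 / Real.log (1/q) < α) (hα' : α < 1 / Real.log (1/p))
    (T T' : ℝ → ℝ)
    (hT : ∀ s, T s = p ^ (-s) + q ^ (-s))
    (hT' : ∀ s, T' s = p ^ (-s) * Real.log (1/p) + q ^ (-s) * Real.log (1/q))
    (ρα : ℝ)
    (hρ : ρα = -(1 / Real.log (p/q)) *
      Real.log ((α * Real.log (1/q) - 1) / (1 - α * Real.log (1/p)))) :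
    (∀ s, HasDerivAt T (T' s) s) ∧
    α * T' ρα / T ρα = 1 ∧
    (∀ s : ℝ, α * T' s / T s = 1 → s = ρα) := by
  have hp0 : 0 < p := by linarith
  have hq0 : 0 < q := by rw [hq]; linarith
  have hq1 : q < 1 := by rw [hq]; linarith
  have hqp : q < p := by rw [hq]; linarith
  -- basic log facts
  have hlp : Real.log (1/p) = -Real.log p := by rw [one_div, Real.log_inv]
  have hlq : Real.log (1/q) = -Real.log q := by rw [one_div, Real.log_inv]
  have hlpq : Real.log (p/q) = Real.log p - Real.log q := Real.log_div (ne_of_gt hp0) (ne_of_gt hq0)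
  have ha : 0 < Real.log (1/p) := by
    rw [hlp, neg_pos]; exact Real.log_neg hp0 hp1
  have hb : 0 < Real.log (1/q) := by
    rw [hlq, neg_pos]; exact Real.log_neg hq0 hq1
  have hc : 0 < Real.log (p/q) := by
    rw [hlpq, sub_pos]; exact Real.log_lt_log hq0 hqp
  set a := Real.log (1/p) with ha_def
  set b := Real.log (1/q) with hb_def
  have hαa : α * a < 1 := by
    have := (lt_div_iff₀ ha).mp hα'; linarith
  have hαb : 1 < α * b := by
    have := (div_lt_iff₀ hb).mp hα; linarith
  have hN : 0 < α * b - 1 := by linarith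
  have hD : 0 < 1 - α * a := by linarith
  -- the key equivalence
  have key : ∀ s : ℝ, α * T' s / T s = 1 ↔ s = ρα := by
    intro s
    have hps : 0 < p ^ (-s) := Real.rpow_pos_of_pos hp0 _
    have hqs : 0 < q ^ (-s) := Real.rpow_pos_of_pos hq0 _
    have hTpos : 0 < T s := by rw [hT]; positivity
    rw [div_eq_one_iff_eq (ne_of_gt hTpos), hT, hT']
    have hρc : ρα * Real.log (p/q) = Real.log (1 - α * a) - Real.log (α * b - 1) := by
      rw [hρ, Real.log_div (ne_of_gt hN) (ne_of_gt hD)]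
      field_simp
      ring
    constructor
    · intro h
      have h2 : q ^ (-s) * (α * b - 1) = p ^ (-s) * (1 - α * a) := by linear_combination h
      have h3 : Real.log (q ^ (-s) * (α * b - 1)) = Real.log (p ^ (-s) * (1 - α * a)) := by rw [h2]
      rw [Real.log_mul (ne_of_gt hqs) (ne_of_gt hN), Real.log_mul (ne_of_gt hps) (ne_of_gt hD),
        Real.log_rpow hq0, Real.log_rpow hp0] at h3
      have hsc : s * Real.log (p/q) = Real.log (1 - α * a) - Real.log (α * b - 1) := by
        rw [hlpq]; linear_combination h3
      exact mul_right_cancel₀ (ne_of_gt hc) (hsc.trans hρc.symm)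
    · intro h
      have hsc : s * Real.log (p/q) = Real.log (1 - α * a) - Real.log (α * b - 1) := by
        rw [h]; exact hρc
      rw [hlpq] at hsc
      have hlog : -s * Real.log q + Real.log (α * b - 1) = -s * Real.log p + Real.log (1 - α * a) := by
        linear_combination hsc
      have h3 : Real.log (q ^ (-s) * (α * b - 1)) = Real.log (p ^ (-s) * (1 - α * a)) := by
        rw [Real.log_mul (ne_of_gt hqs) (ne_of_gt hN), Real.log_mul (ne_of_gt hps) (ne_of_gt hD),
          Real.log_rpow hq0, Real.log_rpow hp0]
        linarith
      have h2 : q ^ (-s) * (α * b - 1) = p ^ (-s) * (1 - α * a) :=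
        Real.log_injOn_pos (Set.mem_Ioi.mpr (by positivity)) (Set.mem_Ioi.mpr (by positivity)) h3
      linear_combination h2
  refine ⟨?_, (key ρα).mpr rfl, fun s hs => (key s).mp hs⟩
  -- derivative
  intro s
  have hTfun : T = fun s => p ^ (-s) + q ^ (-s) := funext hT
  rw [hTfun, hT']
  have d1 : HasDerivAt (fun s : ℝ => p ^ (-s)) (p ^ (-s) * Real.log (1/p)) s := by
    have h1 : HasDerivAt (fun y : ℝ => p ^ y) (p ^ (-s) * Real.log p) (-s) :=
      (Real.hasStrictDerivAt_const_rpow hp0 (-s)).hasDerivAt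
    have := h1.comp s (hasDerivAt_neg s)
    simpa [hlp, Function.comp_def] using this.congr_deriv (by ring)
  have d2 : HasDerivAt (fun s : ℝ => q ^ (-s)) (q ^ (-s) * Real.log (1/q)) s := by
    have h1 : HasDerivAt (fun y : ℝ => q ^ y) (q ^ (-s) * Real.log q) (-s) :=
      (Real.hasStrictDerivAt_const_rpow hq0 (-s)).hasDerivAt
    have := h1.comp s (hasDerivAt_neg s)
    simpa [hlq, Function.comp_def] using this.congr_deriv (by ring)
  exact d1.add d2
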